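/- Let σ be a permutation of size n with σₙ = n and with k left-to-right maxima. For any 1 ≤ j ≤ k, the number of preimages τ of σ under the bubblesort operator B that have exactly j left-to-right maxima is the binomial coefficient C(k−1, j−1). -/

import Mathlib

/-- One pass of bubblesort on a list of naturals. -/
def bpass : List ℕ → List ℕ
  | [] => []
  | [a] => [a]
  | a :: b :: l => if b < a then b :: bpass (a :: l) else a :: bpass (b :: l)

/-- The identity permutation 1 2 ... n as a list. -/
def idList (n : ℕ) : List ℕ := List.map (· + 1) (List.range n)

/-- `l` is (the word of) a permutation of size `n`, i.e. a rearrangement of 1,...,n. -/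
def IsPermList (n : ℕ) (l : List ℕ) : Prop := l.Perm (idList n)

/-- position `j` of `l` holds a left-to-right maximum. -/
def IsLTRMax (l : List ℕ) (j : ℕ) : Prop :=
  j < l.length ∧ ∀ i < j, l.getD i 0 < l.getD j 0

instance (l : List ℕ) (j : ℕ) : Decidable (IsLTRMax l j) := by
  unfold IsLTRMax; infer_instance

/-- the number of left-to-right maxima of `l`. -/
def ltrCount (l : List ℕ) : ℕ :=
  ((List.range l.length).filter fun j => decide (IsLTRMax l j)).length

/-- the length of the longest suffix of `l` consisting of left-to-right maxima. -/
def suffLen (l : List ℕ) : ℕ :=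
  ((List.range l.length).takeWhile fun j => decide (IsLTRMax l (l.length - 1 - j))).length

/-- `σ` is a node of the tree `T(π)` of iterated bubblesort preimages. -/
def IsNode (n : ℕ) (π σ : List ℕ) : Prop :=
  IsPermList n σ ∧ ∃ j, bpass^[j] σ = π

/-- `σ` is a node of `T(π)` at height `j` (j passes needed to reach π, and no fewer). -/
def IsNodeAt (n : ℕ) (π σ : List ℕ) (j : ℕ) : Prop :=
  IsPermList n σ ∧ bpass^[j] σ = π ∧ ∀ i < j, bpass^[i] σ ≠ π

/-- `τ` is a leaf: it has no child, i.e. no bubblesort preimage other than itself. -/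
def IsLeafNode (n : ℕ) (τ : List ℕ) : Prop :=
  ¬ ∃ ρ, IsPermList n ρ ∧ ρ ≠ τ ∧ bpass ρ = τ

/-- `T(π)` and `T(τ)` are isomorphic as rooted trees: there is a bijection between
their node sets sending root to root and commuting with the parent map `bpass`. -/
def TreeIso (n : ℕ) (π τ : List ℕ) : Prop :=
  ∃ φ : List ℕ → List ℕ,
    (∀ σ, IsNode n π σ → IsNode n τ (φ σ)) ∧
    (∀ σ σ', IsNode n π σ → IsNode n π σ' → φ σ = φ σ' → σ = σ') ∧
    (∀ ρ, IsNode n τ ρ → ∃ σ, IsNode n π σ ∧ φ σ = ρ) ∧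
    φ π = τ ∧
    (∀ σ, IsNode n π σ → σ ≠ π → φ (bpass σ) = bpass (φ σ))

theorem bpass_perm (l : List ℕ) : (bpass l).Perm l := by
  induction l using bpass.induct with
  | case1 => simp [bpass]
  | case2 a => simp [bpass]
  | case3 a b l h ih =>
      simp only [bpass, if_pos h]
      exact (ih.cons b).trans (List.Perm.swap a b l)
  | case4 a b l h ih =>
      simp only [bpass, if_neg h]
      exact ih.cons a

theorem bpass_length (l : List ℕ) : (bpass l).length = l.length := (bpass_perm l).length_eq

theorem bpass_eq_nil {l : List ℕ} : bpass l = [] ↔ l = [] := by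
  constructor
  · intro h; have := (bpass_perm l).symm; rw [h] at this; exact this.eq_nil
  · rintro rfl; simp [bpass]

theorem bpass_max (a : ℕ) (l : List ℕ) (h : ∀ x ∈ l, x < a) : bpass (a :: l) = l ++ [a] := by
  induction l with
  | nil => simp [bpass]
  | cons b l ih =>
      have hb : b < a := h b (by simp)
      simp only [bpass, if_pos hb]
      rw [ih (fun x hx => h x (by simp [hx]))]
      simp

theorem bpass_append_max (l₁ : List ℕ) (a : ℕ) (l₂ : List ℕ)
    (h₁ : ∀ x ∈ l₁, x < a) (h₂ : ∀ x ∈ l₂, x < a) :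
    bpass (l₁ ++ a :: l₂) = bpass l₁ ++ l₂ ++ [a] := by
  induction l₁ using bpass.induct with
  | case1 => simpa [bpass] using bpass_max a l₂ h₂
  | case2 c =>
      have hc : ¬ a < c := by have := h₁ c (by simp); omega
      simp only [List.cons_append, List.nil_append, bpass, if_neg hc]
      rw [bpass_max a l₂ h₂]
  | case3 c d l h ih =>
      have := h₁
      simp only [List.cons_append, bpass, if_pos h]
      rw [show c :: (l ++ a :: l₂) = (c :: l) ++ a :: l₂ by simp]
      rw [ih (fun x hx => h₁ x (by simp at hx ⊢; tauto))]
  | case4 c d l h ih =>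
      simp only [List.cons_append, bpass, if_neg h]
      rw [show d :: (l ++ a :: l₂) = (d :: l) ++ a :: l₂ by simp]
      rw [ih (fun x hx => h₁ x (by simp at hx ⊢; tauto))]

theorem bpass_le_getLast (l : List ℕ) :
    ∀ m, (bpass l).getLast? = some m → ∀ x ∈ l, x ≤ m := by
  induction l using bpass.induct with
  | case1 => simp [bpass]
  | case2 a => simp [bpass]
  | case3 a b l hlt ih =>
      intro m hm x hx
      have hne : bpass (a :: l) ≠ [] := by simp [bpass_eq_nil]
      rw [show bpass (a::b::l) = b :: bpass (a::l) by simp [bpass, if_pos hlt]] at hm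
      rcases List.exists_cons_of_ne_nil hne with ⟨c, t, hct⟩
      rw [hct, List.getLast?_cons_cons, ← hct] at hm
      simp only [List.mem_cons] at hx
      rcases hx with rfl | rfl | hx
      · exact ih m hm x (by simp)
      · exact le_trans (le_of_lt hlt) (ih m hm a (by simp))
      · exact ih m hm x (by simp [hx])
  | case4 a b l hlt ih =>
      intro m hm x hx
      have hne : bpass (b :: l) ≠ [] := by simp [bpass_eq_nil]
      rw [show bpass (a::b::l) = a :: bpass (b::l) by simp [bpass, if_neg hlt]] at hm
      rcases List.exists_cons_of_ne_nil hne with ⟨c, t, hct⟩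
      rw [hct, List.getLast?_cons_cons, ← hct] at hm
      simp only [List.mem_cons] at hx
      rcases hx with rfl | hx
      · exact le_trans (by omega) (ih m hm b (by simp))
      · exact ih m hm x (List.mem_cons.2 hx)

theorem getD_mem' (l : List ℕ) (i : ℕ) (h : i < l.length) : l.getD i 0 ∈ l := by
  rw [List.getD_eq_getElem l 0 h]; exact List.getElem_mem h

theorem ltrCount_nil : ltrCount [] = 0 := rfl

theorem isLTRMax_zero (l : List ℕ) (h : l ≠ []) : IsLTRMax l 0 :=
  ⟨List.length_pos_iff.2 h, by omega⟩

theorem ltrCount_eq_zero {l : List ℕ} : ltrCount l = 0 ↔ l = [] := by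
  constructor
  · intro h
    by_contra hne
    have h0 : (0 : ℕ) ∈ (List.range l.length).filter fun j => decide (IsLTRMax l j) := by
      simp [List.mem_filter, List.mem_range, isLTRMax_zero l hne, List.length_pos_iff.2 hne]
    rw [ltrCount, List.length_eq_zero_iff] at h
    simp [h] at h0
  · rintro rfl; rfl

theorem ltrCount_append_max (l₁ : List ℕ) (a : ℕ) (l₂ : List ℕ)
    (h₁ : ∀ x ∈ l₁, x < a) (h₂ : ∀ x ∈ l₂, x < a) :
    ltrCount (l₁ ++ a :: l₂) = ltrCount l₁ + 1 := by
  set L := l₁ ++ a :: l₂ with hL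
  have hlen : L.length = l₁.length + (1 + l₂.length) := by simp [hL]; omega
  have hget1 : ∀ i, i < l₁.length → L.getD i 0 = l₁.getD i 0 := fun i hi =>
    List.getD_append _ _ _ _ hi
  have hgeta : L.getD l₁.length 0 = a := by
    rw [hL, List.getD_append_right _ _ _ _ (le_refl _)]; simp
  have hget2 : ∀ t, t < l₂.length → L.getD (l₁.length + (1 + t)) 0 = l₂.getD t 0 := by
    intro t ht
    rw [hL, List.getD_append_right _ _ _ _ (by omega)]
    have h3 : l₁.length + (1 + t) - l₁.length = t + 1 := by omega
    rw [h3]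
    simp
  have part1 : ∀ j, j < l₁.length → (IsLTRMax L j ↔ IsLTRMax l₁ j) := by
    intro j hj
    constructor
    · rintro ⟨-, hmax⟩
      exact ⟨hj, fun i hi => by
        have := hmax i hi; rwa [hget1 i (by omega), hget1 j hj] at this⟩
    · rintro ⟨-, hmax⟩
      exact ⟨by omega, fun i hi => by
        rw [hget1 i (by omega), hget1 j hj]; exact hmax i hi⟩
  have parta : IsLTRMax L l₁.length := by
    refine ⟨by omega, fun i hi => ?_⟩
    rw [hgeta, hget1 i hi]
    exact h₁ _ (getD_mem' _ _ hi)
  have part2 : ∀ t, t < l₂.length → ¬ IsLTRMax L (l₁.length + (1 + t)) := by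
    rintro t ht ⟨-, hmax⟩
    have := hmax l₁.length (by omega)
    rw [hgeta, hget2 t ht] at this
    exact absurd this (by have := h₂ _ (getD_mem' l₂ t ht); omega)
  rw [ltrCount, hlen, List.range_add, List.filter_append,
    List.range_add, List.map_append, List.filter_append]
  have e1 : (List.range l₁.length).filter (fun j => decide (IsLTRMax L j)) =
      (List.range l₁.length).filter (fun j => decide (IsLTRMax l₁ j)) :=
    List.filter_congr (fun j hj => decide_eq_decide.2 (part1 j (List.mem_range.1 hj)))
  have e2 : ((List.range 1).map (l₁.length + ·)).filter (fun j => decide (IsLTRMax L j))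
      = [l₁.length] := by
    simp [List.range_succ, parta]
  have e3 : (((List.range l₂.length).map (1 + ·)).map (l₁.length + ·)).filter
      (fun j => decide (IsLTRMax L j)) = [] := by
    rw [List.filter_eq_nil_iff]
    intro j hj
    simp only [List.mem_map, List.mem_range] at hj
    obtain ⟨t, ht, rfl⟩ : ∃ t, t < l₂.length ∧ l₁.length + (1 + t) = j := by
      obtain ⟨x, ⟨t, ht, rfl⟩, rfl⟩ := hj
      exact ⟨t, ht, rfl⟩
    simpa using part2 t ht
  rw [e1, e2, e3]
  simp [ltrCount]

theorem range_filter_lt (n m : ℕ) :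
    (List.range n).filter (fun q => decide (q < m)) = List.range (min m n) := by
  induction n with
  | zero => simp
  | succ n ih =>
      rw [List.range_succ, List.filter_append, ih]
      by_cases h : n < m
      · have h1 : min m n = n := by omega
        have h2 : min m (n+1) = n + 1 := by omega
        rw [h1, h2, List.range_succ]
        simp [h]
      · have h1 : min m (n+1) = min m n := by omega
        rw [h1]
        simp [h]

theorem getD_take (l : List ℕ) (m i : ℕ) (h : i < m) : (l.take m).getD i 0 = l.getD i 0 := by
  simp [List.getElem?_take_of_lt h]

theorem ltrCount_take (l : List ℕ) (m : ℕ) :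
    ltrCount (l.take m) =
      (((List.range l.length).filter fun j => decide (IsLTRMax l j)).filter
        (fun q => decide (q < m))).length := by
  have hiff : ∀ j, j < min m l.length → (IsLTRMax (l.take m) j ↔ IsLTRMax l j) := by
    intro j hj
    have hjm : j < m := by omega
    constructor
    · rintro ⟨-, hmax⟩
      refine ⟨by omega, fun i hi => ?_⟩
      have := hmax i hi
      rwa [getD_take _ _ _ (by omega), getD_take _ _ _ hjm] at this
    · rintro ⟨-, hmax⟩
      refine ⟨by simpa using hj, fun i hi => ?_⟩
      rw [getD_take _ _ _ (by omega), getD_take _ _ _ hjm]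
      exact hmax i hi
  rw [ltrCount, List.length_take]
  rw [List.filter_filter]
  have e1 : ((List.range l.length).filter fun j => decide (j < m) && decide (IsLTRMax l j))
      = ((List.range l.length).filter (fun q => decide (q < m))).filter
          (fun j => decide (IsLTRMax l j)) := by
    rw [List.filter_filter]
    exact List.filter_congr (fun j _ => by rw [Bool.and_comm])
  rw [e1, range_filter_lt]
  apply congrArg
  exact List.filter_congr (fun j hj => decide_eq_decide.2 (hiff j (List.mem_range.1 hj)))

theorem sortedSum (P : List ℕ) (hP : P.Pairwise (· < ·)) (f : ℕ → ℕ) :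
    ∑ p ∈ P.toFinset, f ((P.filter (fun q => decide (q < p))).length) =
      ∑ i ∈ Finset.range P.length, f i := by
  induction P generalizing f with
  | nil => simp
  | cons p Q ih =>
      rw [List.pairwise_cons] at hP
      obtain ⟨hpQ, hQ⟩ := hP
      have hpnot : p ∉ Q.toFinset := by
        simp only [List.mem_toFinset]
        intro h; exact absurd (hpQ p h) (lt_irrefl p)
      rw [List.toFinset_cons, Finset.sum_insert hpnot]
      have head : ((p :: Q).filter (fun q => decide (q < p))).length = 0 := by
        rw [List.length_eq_zero_iff, List.filter_eq_nil_iff]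
        intro q hq
        simp only [decide_eq_true_eq]
        rcases List.mem_cons.1 hq with rfl | hq'
        · omega
        · have := hpQ q hq'; omega
      have tail : ∀ q ∈ Q.toFinset,
          f (((p :: Q).filter (fun r => decide (r < q))).length) =
          (fun i => f (i + 1)) ((Q.filter (fun r => decide (r < q))).length) := by
        intro q hq
        rw [List.mem_toFinset] at hq
        have hpq : p < q := hpQ q hq
        simp only [List.filter_cons, hpq, decide_true, if_pos trivial]
        simp
      rw [head, Finset.sum_congr rfl tail, ih hQ (fun i => f (i + 1))]
      rw [List.length_cons, Finset.sum_range_succ', Nat.add_comm]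

-- new material
theorem hockey (K r : ℕ) : ∑ i ∈ Finset.range K, Nat.choose i r = Nat.choose K (r + 1) := by
  induction K with
  | zero => simp
  | succ K ih => rw [Finset.sum_range_succ, ih, Nat.choose_succ_succ, Nat.add_comm]

theorem finite_pre (π : List ℕ) (Q : List ℕ → Prop) : {τ | bpass τ = π ∧ Q τ}.Finite := by
  apply Set.Finite.subset (List.finite_toSet π.permutations)
  rintro τ ⟨h, -⟩
  exact List.mem_permutations.2 (h ▸ (bpass_perm τ).symm)


theorem takeWhile_ne (l₁ : List ℕ) (a : ℕ) (l₂ : List ℕ) (h : ∀ x ∈ l₁, x ≠ a) :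
    ((l₁ ++ a :: l₂).takeWhile (· != a)) = l₁ := by
  induction l₁ with
  | nil => simp [List.takeWhile_cons]
  | cons b l ih =>
      have hb : b ≠ a := h b (by simp)
      simp [List.takeWhile_cons, hb, ih (fun x hx => h x (by simp [hx]))]

theorem preimage_decomp (σ' : List ℕ) (a : ℕ) (ha : ∀ x ∈ σ', x < a)
    (hnd : (σ' ++ [a]).Nodup) (τ : List ℕ) (hτ : bpass τ = σ' ++ [a]) :
    ∃ m ≤ σ'.length, ∃ τL, τL.length = m ∧ bpass τL = σ'.take m ∧
      τ = τL ++ a :: σ'.drop m := by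
  have hperm : τ.Perm (σ' ++ [a]) := hτ ▸ (bpass_perm τ).symm
  have hndτ : τ.Nodup := hperm.nodup_iff.2 hnd
  have haτ : a ∈ τ := hperm.mem_iff.2 (by simp)
  obtain ⟨t₁, t₂, rfl⟩ := List.append_of_mem haτ
  have hmid := List.nodup_middle.1 hndτ
  rw [List.nodup_cons] at hmid
  have hat : a ∉ t₁ ++ t₂ := hmid.1
  have hlt : ∀ x ∈ t₁ ++ t₂, x < a := by
    intro x hx
    have hxτ : x ∈ t₁ ++ a :: t₂ := by
      rcases List.mem_append.1 hx with h' | h'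
      · exact List.mem_append.2 (Or.inl h')
      · exact List.mem_append.2 (Or.inr (List.mem_cons.2 (Or.inr h')))
    have : x ∈ σ' ++ [a] := hperm.mem_iff.1 hxτ
    rcases List.mem_append.1 this with h' | h'
    · exact ha x h'
    · simp only [List.mem_singleton] at h'
      exact absurd (h' ▸ hx) hat
  have h₁ : ∀ x ∈ t₁, x < a := fun x hx => hlt x (List.mem_append.2 (Or.inl hx))
  have h₂ : ∀ x ∈ t₂, x < a := fun x hx => hlt x (List.mem_append.2 (Or.inr hx))
  rw [bpass_append_max t₁ a t₂ h₁ h₂] at hτ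
  have hcancel : bpass t₁ ++ t₂ = σ' := by
    have : (bpass t₁ ++ t₂) ++ [a] = σ' ++ [a] := by rw [← hτ, List.append_assoc]
    exact List.append_cancel_right this
  refine ⟨t₁.length, ?_, t₁, rfl, ?_, ?_⟩
  · rw [← hcancel]; simp [bpass_length]
  · rw [← hcancel, ← bpass_length t₁, List.take_left]
  · rw [← hcancel, ← bpass_length t₁, List.drop_left]

theorem preimage_build (σ' : List ℕ) (a : ℕ) (ha : ∀ x ∈ σ', x < a)
    (m : ℕ) (τL : List ℕ) (hb : bpass τL = σ'.take m) :
    bpass (τL ++ a :: σ'.drop m) = σ' ++ [a] := by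
  have hL : ∀ x ∈ τL, x < a := by
    intro x hx
    have : x ∈ σ'.take m := hb ▸ (bpass_perm τL).mem_iff.2 hx
    exact ha x (List.mem_of_mem_take this)
  have hR : ∀ x ∈ σ'.drop m, x < a := fun x hx => ha x (List.mem_of_mem_drop hx)
  rw [bpass_append_max τL a _ hL hR, hb, List.append_assoc, ← List.append_assoc,
    List.take_append_drop]

theorem take_concat_getD (l : List ℕ) (m : ℕ) (h1 : 1 ≤ m) (h2 : m - 1 < l.length) :
    l.take m = l.take (m-1) ++ [l.getD (m-1) 0] := by
  obtain ⟨m', rfl⟩ : ∃ m', m = m' + 1 := ⟨m - 1, by omega⟩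
  simp only [Nat.add_sub_cancel]
  rw [List.take_succ, List.getElem?_eq_getElem (by omega : m' < l.length),
    List.getD_eq_getElem l 0 (by omega : m' < l.length)]
  rfl

theorem main_count : ∀ (N : ℕ) (σ' : List ℕ) (a j : ℕ), σ'.length ≤ N →
    (σ' ++ [a]).Nodup → (∀ x ∈ σ', x < a) → 1 ≤ j →
    Set.ncard {τ | bpass τ = σ' ++ [a] ∧ ltrCount τ = j} =
      (ltrCount σ').choose (j - 1) := by
  intro N
  induction N using Nat.strong_induction_on with
  | _ N ih =>
  intro σ' a j hlen hnd ha hj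
  have hndσ : σ'.Nodup := (List.sublist_append_left σ' [a]).nodup hnd
  have hfin := finite_pre (σ' ++ [a]) (fun τ => ltrCount τ = j)
  rcases Nat.lt_or_ge j 2 with hj1 | hj2
  · -- j = 1
    have hj1' : j = 1 := by omega
    subst hj1'
    have hSeq : {τ | bpass τ = σ' ++ [a] ∧ ltrCount τ = 1} = {a :: σ'} := by
      ext τ
      simp only [Set.mem_setOf_eq, Set.mem_singleton_iff]
      constructor
      · rintro ⟨hb, hc⟩
        obtain ⟨m, hm, τL, hlenL, hbL, rfl⟩ := preimage_decomp σ' a ha hnd τ hb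
        have h1 : ∀ x ∈ τL, x < a := by
          intro x hx
          have : x ∈ σ'.take m := hbL ▸ (bpass_perm τL).mem_iff.2 hx
          exact ha x (List.mem_of_mem_take this)
        have h2 : ∀ x ∈ σ'.drop m, x < a := fun x hx => ha x (List.mem_of_mem_drop hx)
        rw [ltrCount_append_max τL a _ h1 h2] at hc
        have hL0 : τL = [] := ltrCount_eq_zero.1 (by omega)
        subst hL0
        simp only [List.length_nil] at hlenL
        subst hlenL
        simp
      · rintro rfl
        refine ⟨bpass_max a σ' ha, ?_⟩
        have := ltrCount_append_max [] a σ' (by simp) ha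
        simpa [ltrCount_nil] using this
    rw [hSeq, Set.ncard_singleton]
    simp
  · -- j ≥ 2
    set L := σ'.length with hLdef
    set P := (List.range σ'.length).filter (fun q => decide (IsLTRMax σ' q)) with hPdef
    have hPsort : P.Pairwise (· < ·) := (List.pairwise_lt_range).filter _
    have hPmem : ∀ p ∈ P, p < L ∧ IsLTRMax σ' p := by
      intro p hp
      rw [hPdef, List.mem_filter, List.mem_range] at hp
      exact ⟨hp.1, of_decide_eq_true hp.2⟩
    -- the fiber index function
    set f : List ℕ → ℕ := fun τ => (τ.takeWhile (· != a)).length with hfdef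
    -- key decomposition facts for members of S
    have hdecomp : ∀ τ, bpass τ = σ' ++ [a] → ltrCount τ = j →
        ∃ m ≤ L, ∃ τL, τL.length = m ∧ bpass τL = σ'.take m ∧
          τ = τL ++ a :: σ'.drop m ∧ f τ = m ∧ ltrCount τL = j - 1 := by
      intro τ hb hc
      obtain ⟨m, hm, τL, hlenL, hbL, rfl⟩ := preimage_decomp σ' a ha hnd τ hb
      have h1 : ∀ x ∈ τL, x < a := by
        intro x hx
        have : x ∈ σ'.take m := hbL ▸ (bpass_perm τL).mem_iff.2 hx
        exact ha x (List.mem_of_mem_take this)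
      have h2 : ∀ x ∈ σ'.drop m, x < a := fun x hx => ha x (List.mem_of_mem_drop hx)
      have hfτ : f (τL ++ a :: σ'.drop m) = m := by
        rw [hfdef]
        simp only
        rw [takeWhile_ne τL a _ (fun x hx => Nat.ne_of_lt (h1 x hx))]
        exact hlenL
      rw [ltrCount_append_max τL a _ h1 h2] at hc
      exact ⟨m, hm, τL, hlenL, hbL, rfl, hfτ, by omega⟩
    -- Finset versions
    have hTfin : ∀ m : ℕ, {τL | bpass τL = σ'.take m ∧ ltrCount τL = j - 1}.Finite :=
      fun m => finite_pre _ _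
    rw [Set.ncard_eq_toFinset_card _ hfin]
    have hmemF : ∀ τ ∈ hfin.toFinset, f τ ∈ Finset.range (L + 1) := by
      intro τ hτ
      rw [Set.Finite.mem_toFinset] at hτ
      obtain ⟨m, hm, τL, -, -, -, hfτ, -⟩ := hdecomp τ hτ.1 hτ.2
      rw [hfτ, Finset.mem_range]; omega
    rw [Finset.card_eq_sum_card_fiberwise hmemF]
    -- fiber cards equal preimage-set cards
    have hfiber : ∀ m ∈ Finset.range (L + 1),
        (hfin.toFinset.filter fun τ => f τ = m).card = ((hTfin m).toFinset).card := by
      intro m hmr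
      rw [Finset.mem_range] at hmr
      apply Finset.card_nbij' (fun τ => τ.take m) (fun τL => τL ++ a :: σ'.drop m)
      · intro τ hτ
        simp only [Finset.mem_coe] at hτ ⊢
        rw [Finset.mem_filter, Set.Finite.mem_toFinset] at hτ
        obtain ⟨⟨hb, hc⟩, hfm⟩ := hτ
        obtain ⟨m', hm', τL, hlenL, hbL, heq, hfτ, hcL⟩ := hdecomp τ hb hc
        have hmm : m' = m := by rw [← hfτ, hfm]
        subst hmm
        have htake : τ.take m' = τL := by
          rw [heq, ← hlenL, List.take_left]
        rw [Set.Finite.mem_toFinset, htake]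
        exact ⟨hbL, hcL⟩
      · intro τL hτL
        simp only [Finset.mem_coe] at hτL ⊢
        rw [Set.Finite.mem_toFinset] at hτL
        obtain ⟨hbL, hcL⟩ := hτL
        have h1 : ∀ x ∈ τL, x < a := by
          intro x hx
          have : x ∈ σ'.take m := hbL ▸ (bpass_perm τL).mem_iff.2 hx
          exact ha x (List.mem_of_mem_take this)
        have h2 : ∀ x ∈ σ'.drop m, x < a := fun x hx => ha x (List.mem_of_mem_drop hx)
        have hlenL : τL.length = m := by
          rw [← bpass_length τL, hbL, List.length_take]
          omega
        rw [Finset.mem_filter, Set.Finite.mem_toFinset]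
        refine ⟨⟨preimage_build σ' a ha m τL hbL, ?_⟩, ?_⟩
        · rw [ltrCount_append_max τL a _ h1 h2, hcL]; omega
        · rw [hfdef]
          simp only
          rw [takeWhile_ne τL a _ (fun x hx => Nat.ne_of_lt (h1 x hx))]
          exact hlenL
      · intro τ hτ
        rw [Finset.mem_coe] at hτ
        beta_reduce
        rw [Finset.mem_filter, Set.Finite.mem_toFinset] at hτ
        obtain ⟨⟨hb, hc⟩, hfm⟩ := hτ
        obtain ⟨m', hm', τL, hlenL, hbL, heq, hfτ, hcL⟩ := hdecomp τ hb hc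
        have hmm : m' = m := by rw [← hfτ, hfm]
        subst hmm
        have htake : τ.take m' = τL := by rw [heq, ← hlenL, List.take_left]
        rw [htake, ← heq]
      · intro τL hτL
        rw [Finset.mem_coe] at hτL
        beta_reduce
        rw [Set.Finite.mem_toFinset] at hτL
        have hlenL : τL.length = m := by
          rw [← bpass_length τL, hτL.1, List.length_take]
          omega
        rw [← hlenL, List.take_left]
    rw [Finset.sum_congr rfl hfiber]
    -- evaluate each (Tfin m).card
    have hval : ∀ m ∈ Finset.range (L + 1), ((hTfin m).toFinset).card =
        if 1 ≤ m ∧ IsLTRMax σ' (m - 1) then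
          ((P.filter (fun q => decide (q < m - 1))).length).choose (j - 2)
        else 0 := by
      intro m hmr
      rw [Finset.mem_range] at hmr
      by_cases hc : 1 ≤ m ∧ IsLTRMax σ' (m - 1)
      · rw [if_pos hc]
        obtain ⟨hm1, hltr⟩ := hc
        have hm1L : m - 1 < L := by omega
        have htake : σ'.take m = σ'.take (m - 1) ++ [σ'.getD (m - 1) 0] :=
          take_concat_getD σ' m hm1 hm1L
        have hdom : ∀ x ∈ σ'.take (m - 1), x < σ'.getD (m - 1) 0 := by
          intro x hx
          rw [List.mem_take_iff_getElem] at hx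
          obtain ⟨i, hi, rfl⟩ := hx
          have hiL : i < L := by omega
          rw [← List.getD_eq_getElem σ' 0 hiL]
          exact hltr.2 i (by omega)
        have hnd' : (σ'.take (m - 1) ++ [σ'.getD (m - 1) 0]).Nodup := by
          rw [← htake]
          exact (List.take_sublist m σ').nodup hndσ
        have hlen' : (σ'.take (m - 1)).length ≤ L - 1 := by
          rw [List.length_take]; omega
        have hLN : L - 1 < N := by omega
        have := ih (L - 1) hLN (σ'.take (m - 1)) (σ'.getD (m - 1) 0) (j - 1)
          hlen' hnd' hdom (by omega)
        rw [← htake] at this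
        have hTcard : ((hTfin m).toFinset).card =
            Set.ncard {τL | bpass τL = σ'.take m ∧ ltrCount τL = j - 1} :=
          (Set.ncard_eq_toFinset_card _ (hTfin m)).symm
        rw [hTcard, this, ltrCount_take]
        have hjj : j - 1 - 1 = j - 2 := by omega
        rw [hjj]
      · rw [if_neg hc]
        rw [Finset.card_eq_zero, Set.Finite.toFinset_eq_empty]
        rw [Set.eq_empty_iff_forall_notMem]
        rintro τL ⟨hbL, hcL⟩
        rcases Nat.lt_or_ge m 1 with hm0 | hm1
        · -- m = 0
          have : m = 0 := by omega
          subst this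
          simp only [List.take_zero] at hbL
          have : τL = [] := bpass_eq_nil.1 hbL
          subst this
          rw [ltrCount_nil] at hcL
          omega
        · -- m ≥ 1, not an LTR max position
          have hm1L : m - 1 < L := by omega
          have hnl : ¬ IsLTRMax σ' (m - 1) := fun h => hc ⟨hm1, h⟩
          rw [IsLTRMax, not_and] at hnl
          have := hnl (by omega)
          push_neg at this
          obtain ⟨i, hi, hge⟩ := this
          have hiL : i < L := by omega
          have htake : σ'.take m = σ'.take (m - 1) ++ [σ'.getD (m - 1) 0] :=
            take_concat_getD σ' m hm1 hm1L
          have hlast : (bpass τL).getLast? = some (σ'.getD (m - 1) 0) := by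
            rw [hbL, htake, List.getLast?_concat]
          -- the element at index i of take m σ' is in τL
          have himem : σ'.getD i 0 ∈ τL := by
            apply (bpass_perm τL).mem_iff.1
            rw [hbL]
            have h1 : (σ'.take m).getD i 0 = σ'.getD i 0 := getD_take σ' m i (by omega)
            have h2 : i < (σ'.take m).length := by rw [List.length_take]; omega
            rw [← h1]
            exact getD_mem' _ _ h2
          have hle := bpass_le_getLast τL _ hlast _ himem
          have heq : σ'.getD i 0 = σ'.getD (m - 1) 0 := by omega
          -- contradiction with Nodup
          rw [List.getD_eq_getElem σ' 0 hiL, List.getD_eq_getElem σ' 0 hm1L] at heq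
          have := (hndσ.getElem_inj_iff).1 heq
          omega
    rw [Finset.sum_congr rfl hval]
    -- final sum evaluation
    have himg : P.toFinset.image (· + 1) ⊆ Finset.range (L + 1) := by
      intro m hm
      rw [Finset.mem_image] at hm
      obtain ⟨p, hp, rfl⟩ := hm
      rw [List.mem_toFinset] at hp
      have := (hPmem p hp).1
      rw [Finset.mem_range]; omega
    rw [← Finset.sum_subset himg (by
      intro m hmr hm
      rw [if_neg]
      rintro ⟨hm1, hltr⟩
      apply hm
      rw [Finset.mem_image]
      refine ⟨m - 1, ?_, by omega⟩
      rw [List.mem_toFinset, hPdef, List.mem_filter, List.mem_range]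
      exact ⟨hltr.1, decide_eq_true hltr⟩)]
    rw [Finset.sum_image (by intro x _ y _ h; simpa using h)]
    have hterm : ∀ p ∈ P.toFinset,
        (if 1 ≤ p + 1 ∧ IsLTRMax σ' (p + 1 - 1) then
          ((P.filter (fun q => decide (q < p + 1 - 1))).length).choose (j - 2)
        else 0) = ((P.filter (fun q => decide (q < p))).length).choose (j - 2) := by
      intro p hp
      rw [List.mem_toFinset] at hp
      have hsimp : p + 1 - 1 = p := by omega
      rw [hsimp, if_pos ⟨by omega, (hPmem p hp).2⟩]
    rw [Finset.sum_congr rfl hterm, sortedSum P hPsort (fun i => Nat.choose i (j - 2)), hockey]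
    have : ltrCount σ' = P.length := rfl
    rw [this]
    congr 1
    omega

/-- For `σ` of size `n` with `σₙ = n` and `k` left-to-right maxima, and `1 ≤ j ≤ k`,
the number of bubblesort preimages of `σ` with exactly `j` left-to-right maxima
is the binomial coefficient `C(k-1, j-1)`. -/
theorem stmt_4 (n k j : ℕ) (σ : List ℕ) (hσ : IsPermList n σ)
    (hlast : σ.getLast? = some n) (hk : ltrCount σ = k) (hj1 : 1 ≤ j) (hjk : j ≤ k) :
    Set.ncard {τ : List ℕ | IsPermList n τ ∧ bpass τ = σ ∧ ltrCount τ = j} =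
      Nat.choose (k - 1) (j - 1) := by
  have hne : σ ≠ [] := by intro h; rw [h] at hlast; simp at hlast
  obtain ⟨ys, rfl⟩ := List.getLast?_eq_some_iff.1 hlast
  have hidnd : (idList n).Nodup :=
    (List.nodup_range (n := n)).map (fun x y h => by omega)
  have hnd : (ys ++ [n]).Nodup := hσ.nodup_iff.2 hidnd
  have hys : ∀ x ∈ ys, x < n := by
    intro x hx
    have hxσ : x ∈ ys ++ [n] := List.mem_append.2 (Or.inl hx)
    have hxid : x ∈ idList n := hσ.mem_iff.1 hxσ
    have hxle : x ≤ n := by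
      rw [idList, List.mem_map] at hxid
      obtain ⟨i, hi, rfl⟩ := hxid
      rw [List.mem_range] at hi
      omega
    have hxne : x ≠ n := by
      rintro rfl
      have := (List.nodup_append.1 hnd).2.2
      exact this _ hx _ (by simp) rfl
    omega
  have hset : {τ | IsPermList n τ ∧ bpass τ = ys ++ [n] ∧ ltrCount τ = j} =
      {τ | bpass τ = ys ++ [n] ∧ ltrCount τ = j} := by
    ext τ
    simp only [Set.mem_setOf_eq]
    constructor
    · rintro ⟨-, hb, hc⟩; exact ⟨hb, hc⟩
    · rintro ⟨hb, hc⟩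
      refine ⟨?_, hb, hc⟩
      exact (hb ▸ (bpass_perm τ).symm).trans hσ
  rw [hset, main_count ys.length ys n j le_rfl hnd hys hj1]
  have hkk : ltrCount (ys ++ [n]) = ltrCount ys + 1 :=
    ltrCount_append_max ys n [] hys (by simp)
  congr 1
  omega
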